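/- Let F be a subset of (Δ(H))^I ⊆ ℝ^{I×H} (vectors of probability distributions over a finite set H indexed by a finite set I), let ρ : Δ(I') × F → ℝ be bounded by R and such that σ ↦ ρ(p, σ) is L-Lipschitz in ℓ² norm uniformly in p. Extend ρ positively homogeneously to the cone F_cone = { λσ : σ ∈ F, λ ≥ 0 } by ρ(p, λσ) = λρ(p, σ) (with ρ(p, 0) = 0). Then for each fixed p, the extension v ↦ ρ(p, v) is L̄-Lipschitz on F_cone in ℓ² norm with L̄ = L + (R + L·N_I)√(N_H/N_I), where N_I = |I| and N_H = |H|. -/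

import Mathlib

set_option maxHeartbeats 800000


open scoped BigOperators

theorem stmt13 {I I' H : Type*} [Fintype I] [Fintype I'] [Fintype H] [Nonempty I]
    (F : Set (I → H → ℝ)) (hF : ∀ σ ∈ F, ∀ i, σ i ∈ stdSimplex ℝ H)
    (ρ : (I' → ℝ) → (I → H → ℝ) → ℝ) (R L : ℝ) (hR : 0 ≤ R) (hL : 0 ≤ L)
    (hbound : ∀ p ∈ stdSimplex ℝ I', ∀ σ ∈ F, |ρ p σ| ≤ R)
    (hlip : ∀ p ∈ stdSimplex ℝ I', ∀ σ ∈ F, ∀ σ' ∈ F,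
      |ρ p σ - ρ p σ'| ≤ L * Real.sqrt (∑ i, ∑ s, (σ i s - σ' i s) ^ 2)) :
    ∀ p ∈ stdSimplex ℝ I', ∀ σ ∈ F, ∀ σ' ∈ F, ∀ lam lam' : ℝ, 0 ≤ lam → 0 ≤ lam' →
      |lam * ρ p σ - lam' * ρ p σ'| ≤
        (L + (R + L * (Fintype.card I : ℝ)) *
            Real.sqrt ((Fintype.card H : ℝ) / (Fintype.card I : ℝ))) *
          Real.sqrt (∑ i, ∑ s, (lam * σ i s - lam' * σ' i s) ^ 2) := by
  intro p hp σ hσ σ' hσ' lam lam' hlam hlam'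
  classical
  set N : ℝ := (Fintype.card I : ℝ) with hNdef
  set M : ℝ := (Fintype.card H : ℝ) with hMdef
  have hN1 : (1 : ℝ) ≤ N := by
    have h : 1 ≤ Fintype.card I := Fintype.card_pos
    rw [hNdef]
    exact_mod_cast h
  have hN0 : (0 : ℝ) < N := lt_of_lt_of_le one_pos hN1
  have hM0 : (0 : ℝ) ≤ M := Nat.cast_nonneg _
  -- Euclidean norms
  have keyE : ∀ x : EuclideanSpace ℝ (I × H),
      ‖x‖ = Real.sqrt (∑ i : I, ∑ s : H, x (i, s) ^ 2) := by
    intro x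
    rw [EuclideanSpace.norm_eq]
    congr 1
    rw [Fintype.sum_prod_type]
    simp [Real.norm_eq_abs, sq_abs]
  set eσ : EuclideanSpace ℝ (I × H) := WithLp.toLp 2 (fun q : I × H => σ q.1 q.2) with heσ
  set eσ' : EuclideanSpace ℝ (I × H) := WithLp.toLp 2 (fun q : I × H => σ' q.1 q.2) with heσ'
  set eD : EuclideanSpace ℝ (I × H) :=
    WithLp.toLp 2 (fun q : I × H => lam * σ q.1 q.2 - lam' * σ' q.1 q.2) with heD
  have hDdecomp : lam' • (eσ - eσ') = eD - (lam - lam') • eσ := by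
    ext q
    simp only [heσ, heσ', heD, PiLp.smul_apply, PiLp.sub_apply, PiLp.toLp_apply, smul_eq_mul]
    ring
  have hrow : ∀ τ ∈ F, ∀ i : I, (∀ s, 0 ≤ τ i s) ∧ ∑ s, τ i s = 1 := by
    intro τ hτ i
    exact hF τ hτ i
  have hσsum : ∑ i, ∑ s, σ i s = N := by
    have h : ∀ i : I, ∑ s, σ i s = 1 := fun i => (hrow σ hσ i).2
    simp [h, hNdef]
  have hσ'sum : ∑ i, ∑ s, σ' i s = N := by
    have h : ∀ i : I, ∑ s, σ' i s = 1 := fun i => (hrow σ' hσ' i).2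
    simp [h, hNdef]
  -- ‖eσ‖ ≤ √N
  have hσnorm : ‖eσ‖ ≤ Real.sqrt N := by
    rw [keyE eσ]
    apply Real.sqrt_le_sqrt
    have hterm : ∀ i : I, ∑ s : H, eσ (i, s) ^ 2 ≤ 1 := by
      intro i
      obtain ⟨h0, h1⟩ := hrow σ hσ i
      have : ∀ s : H, eσ (i, s) ^ 2 ≤ σ i s := by
        intro s
        have hle : σ i s ≤ 1 := by
          have := Finset.single_le_sum (f := σ i) (fun t _ => h0 t) (Finset.mem_univ s)
          linarith
        have : eσ (i, s) = σ i s := by rw [heσ]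
        rw [this]
        nlinarith [h0 s]
      calc ∑ s : H, eσ (i, s) ^ 2 ≤ ∑ s : H, σ i s := Finset.sum_le_sum fun s _ => this s
        _ = 1 := h1
    calc ∑ i : I, ∑ s : H, eσ (i, s) ^ 2 ≤ ∑ _i : I, (1 : ℝ) :=
          Finset.sum_le_sum fun i _ => hterm i
      _ = N := by simp [hNdef]
  -- ℓ¹ sum of eD
  have hsumD : ∑ q : I × H, eD q = (lam - lam') * N := by
    rw [Fintype.sum_prod_type]
    calc ∑ i : I, ∑ s : H, eD (i, s)
        = ∑ i : I, ∑ s : H, (lam * σ i s - lam' * σ' i s) := by rw [heD]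
      _ = lam * (∑ i, ∑ s, σ i s) - lam' * (∑ i, ∑ s, σ' i s) := by
          rw [Finset.mul_sum, Finset.mul_sum, ← Finset.sum_sub_distrib]
          refine Finset.sum_congr rfl fun i _ => ?_
          rw [Finset.mul_sum, Finset.mul_sum, ← Finset.sum_sub_distrib]
      _ = (lam - lam') * N := by rw [hσsum, hσ'sum]; ring
  -- Cauchy–Schwarz
  have hsqD : ∑ q : I × H, eD q ^ 2 = ‖eD‖ ^ 2 := by
    rw [keyE eD, Real.sq_sqrt (by positivity), Fintype.sum_prod_type]
  have hCS : ((lam - lam') * N) ^ 2 ≤ (N * M) * ‖eD‖ ^ 2 := by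
    rw [← hsumD, ← hsqD]
    calc (∑ q : I × H, eD q) ^ 2
        ≤ (Finset.univ : Finset (I × H)).card * ∑ q : I × H, eD q ^ 2 :=
          sq_sum_le_card_mul_sum_sq
      _ = (N * M) * ∑ q : I × H, eD q ^ 2 := by
          rw [Finset.card_univ, Fintype.card_prod]
          push_cast [hNdef, hMdef]
          ring
  have hDn : (0:ℝ) ≤ ‖eD‖ := norm_nonneg _
  have ht : |lam - lam'| ≤ Real.sqrt (M / N) * ‖eD‖ := by
    have h1 : |lam - lam'| * N = Real.sqrt (((lam - lam') * N) ^ 2) := by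
      rw [Real.sqrt_sq_eq_abs, abs_mul, abs_of_pos hN0]
    have h2 : Real.sqrt (((lam - lam') * N) ^ 2)
        ≤ Real.sqrt ((N * M) * ‖eD‖ ^ 2) := Real.sqrt_le_sqrt hCS
    have h3 : Real.sqrt ((N * M) * ‖eD‖ ^ 2) = Real.sqrt (N * M) * ‖eD‖ := by
      rw [Real.sqrt_mul (by positivity), Real.sqrt_sq hDn]
    have h4 : Real.sqrt (N * M) = Real.sqrt (M / N) * N := by
      rw [← Real.sqrt_sq hN0.le, ← Real.sqrt_mul (by positivity)]
      congr 1
      field_simp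
      rw [Real.sq_sqrt (by positivity)]
    have h5 : |lam - lam'| * N ≤ Real.sqrt (M / N) * ‖eD‖ * N := by
      calc |lam - lam'| * N = Real.sqrt (((lam - lam') * N) ^ 2) := h1
        _ ≤ Real.sqrt (N * M) * ‖eD‖ := h2.trans_eq h3
        _ = Real.sqrt (M / N) * ‖eD‖ * N := by rw [h4]; ring
    exact le_of_mul_le_mul_right h5 hN0
  -- step 1
  have h1 : |lam * ρ p σ - lam' * ρ p σ'|
      ≤ lam' * |ρ p σ - ρ p σ'| + |lam - lam'| * R := by
    have heq : lam * ρ p σ - lam' * ρ p σ'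
        = lam' * (ρ p σ - ρ p σ') + (lam - lam') * ρ p σ := by ring
    rw [heq]
    refine (abs_add_le _ _).trans ?_
    rw [abs_mul, abs_mul, abs_of_nonneg hlam']
    gcongr
    exact hbound p hp σ hσ
  -- step 2
  have hnorm_eq : Real.sqrt (∑ i, ∑ s, (σ i s - σ' i s) ^ 2) = ‖eσ - eσ'‖ := by
    rw [keyE (eσ - eσ')]
    simp [heσ, heσ', PiLp.sub_apply]
  have h2 : lam' * |ρ p σ - ρ p σ'| ≤ L * (‖eD‖ + |lam - lam'| * Real.sqrt N) := by
    have hl := hlip p hp σ hσ σ' hσ'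
    rw [hnorm_eq] at hl
    have hl' : lam' * |ρ p σ - ρ p σ'| ≤ lam' * (L * ‖eσ - eσ'‖) :=
      mul_le_mul_of_nonneg_left hl hlam'
    have hsmul : lam' * ‖eσ - eσ'‖ = ‖lam' • (eσ - eσ')‖ := by
      rw [norm_smul, Real.norm_eq_abs, abs_of_nonneg hlam']
    have htri : ‖lam' • (eσ - eσ')‖ ≤ ‖eD‖ + |lam - lam'| * ‖eσ‖ := by
      rw [hDdecomp]
      calc ‖eD - (lam - lam') • eσ‖ ≤ ‖eD‖ + ‖(lam - lam') • eσ‖ := norm_sub_le _ _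
        _ = ‖eD‖ + |lam - lam'| * ‖eσ‖ := by rw [norm_smul, Real.norm_eq_abs]
    calc lam' * |ρ p σ - ρ p σ'| ≤ lam' * (L * ‖eσ - eσ'‖) := hl'
      _ = L * (lam' * ‖eσ - eσ'‖) := by ring
      _ = L * ‖lam' • (eσ - eσ')‖ := by rw [hsmul]
      _ ≤ L * (‖eD‖ + |lam - lam'| * ‖eσ‖) := mul_le_mul_of_nonneg_left htri hL
      _ ≤ L * (‖eD‖ + |lam - lam'| * Real.sqrt N) := by gcongr
  -- rewrite the goal norm
  have hgoal_norm : Real.sqrt (∑ i, ∑ s, (lam * σ i s - lam' * σ' i s) ^ 2) = ‖eD‖ := by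
    rw [keyE eD]
  rw [hgoal_norm]
  have hsqrtN : Real.sqrt N ≤ N := by
    nlinarith [Real.sq_sqrt hN0.le, Real.sqrt_nonneg N, sq_nonneg (Real.sqrt N - 1)]
  have hMN : (0:ℝ) ≤ Real.sqrt (M / N) := Real.sqrt_nonneg _
  have habs : (0:ℝ) ≤ |lam - lam'| := abs_nonneg _
  have hstep : |lam - lam'| * (L * Real.sqrt N + R)
      ≤ Real.sqrt (M / N) * ‖eD‖ * (L * N + R) := by
    have hx : L * Real.sqrt N + R ≤ L * N + R := by nlinarith
    calc |lam - lam'| * (L * Real.sqrt N + R)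
        ≤ (Real.sqrt (M / N) * ‖eD‖) * (L * Real.sqrt N + R) := by
          apply mul_le_mul_of_nonneg_right ht (by positivity)
      _ ≤ Real.sqrt (M / N) * ‖eD‖ * (L * N + R) := by
          apply mul_le_mul_of_nonneg_left hx (by positivity)
  calc |lam * ρ p σ - lam' * ρ p σ'|
      ≤ lam' * |ρ p σ - ρ p σ'| + |lam - lam'| * R := h1
    _ ≤ L * (‖eD‖ + |lam - lam'| * Real.sqrt N) + |lam - lam'| * R := by linarith
    _ = L * ‖eD‖ + |lam - lam'| * (L * Real.sqrt N + R) := by ring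
    _ ≤ L * ‖eD‖ + Real.sqrt (M / N) * ‖eD‖ * (L * N + R) := by linarith
    _ = (L + (R + L * N) * Real.sqrt (M / N)) * ‖eD‖ := by ring
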